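/- Let n ≥ 2 and m ≥ 1, and let 𝒬 be a nonempty family of functions Q : {1,…,m} × {1,…,n}² → [0,1]. For each user i ∈ {1,…,m} let ω_i ⊆ {1,…,n} have both ω_i and its complement ω̄_i nonempty, and define Ê_S[Q] = (1/m) Σ_{i=1}^m (1/(|ω_i||ω̄_i|)) Σ_{p ∈ ω_i} Σ_{q ∈ ω̄_i} Q(i, p, q). Let c : 𝒬 → ℝ be any bounded function (e.g. Q ↦ 𝔼_𝒟[Q]). Fix a user a, items b ∈ ω_a and b' ∈ ω̄_a, and let the modified sample Ŝ replace ω_a by ω_a' = (ω_a \ {b}) ∪ {b'}, leaving ω_i unchanged for i ≠ a. Then | sup_{Q ∈ 𝒬} (c(Q) − Ê_S[Q]) − sup_{Q ∈ 𝒬} (c(Q) − Ê_Ŝ[Q]) | ≤ (n−1)/(m |ω_a||ω̄_a|). -/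

import Mathlib

open Finset

/-- The empirical AUC-type expectation
`Ê_S[Q] = (1/m) Σ_i (1/(|ω_i||ω̄_i|)) Σ_{p∈ω_i} Σ_{q∈ω̄_i} Q(i,p,q)`
of a function `Q` over the sample `S = (ω_1, …, ω_m)`. -/
noncomputable def empExp {m n : ℕ} (ω : Fin m → Finset (Fin n))
    (Q : Fin m → Fin n → Fin n → ℝ) : ℝ :=
  (1 / (m : ℝ)) * ∑ i, (1 / (((ω i).card : ℝ) * (((ω i)ᶜ).card : ℝ))) *
    ∑ p ∈ ω i, ∑ q ∈ (ω i)ᶜ, Q i p q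


lemma sum_insert_insert {β : Type*} [DecidableEq β] (E F : Finset β) (x y : β)
    (hx : x ∉ E) (hy : y ∉ F) (f : β → β → ℝ) :
    ∑ p ∈ insert x E, ∑ q ∈ insert y F, f p q
      = f x y + ∑ q ∈ F, f x q + ∑ p ∈ E, f p y + ∑ p ∈ E, ∑ q ∈ F, f p q := by
  rw [sum_insert hx]
  simp_rw [sum_insert hy, sum_add_distrib]
  ring

lemma compl_swap {n : ℕ} (s : Finset (Fin n)) (b b' : Fin n) (hb : b ∈ s) (hb' : b' ∉ s) :
    (insert b' (s.erase b))ᶜ = insert b (sᶜ.erase b') := by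
  ext x
  simp only [mem_compl, mem_insert, mem_erase, not_or, not_and]
  by_cases h1 : x = b <;> by_cases h2 : x = b' <;> simp_all

lemma empExp_swap_bound {m n : ℕ} (hm : 1 ≤ m) (ω : Fin m → Finset (Fin n))
    (Q : Fin m → Fin n → Fin n → ℝ) (hQ : ∀ i p q, Q i p q ∈ Set.Icc (0:ℝ) 1)
    (a : Fin m) (b b' : Fin n) (hb : b ∈ ω a) (hb' : b' ∈ (ω a)ᶜ)
    (hω : (ω a).Nonempty) (hωc : ((ω a)ᶜ).Nonempty) :
    |empExp ω Q - empExp (Function.update ω a (insert b' ((ω a).erase b))) Q|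
      ≤ ((n:ℝ) - 1) / ((m:ℝ) * ((ω a).card : ℝ) * (((ω a)ᶜ).card : ℝ)) := by
  have hb's : b' ∉ ω a := mem_compl.mp hb'
  have hbE : b ∉ (ω a).erase b := notMem_erase _ _
  have hb'F : b' ∉ ((ω a)ᶜ).erase b' := notMem_erase _ _
  have hb'E : b' ∉ (ω a).erase b := fun h => hb's (mem_of_mem_erase h)
  have hbF : b ∉ ((ω a)ᶜ).erase b' := fun h => (mem_compl.mp (mem_of_mem_erase h)) hb
  set E := (ω a).erase b with hE
  set F := ((ω a)ᶜ).erase b' with hF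
  have hcompl : (insert b' E)ᶜ = insert b F := compl_swap (ω a) b b' hb hb's
  -- cards
  have hk1 : 1 ≤ (ω a).card := card_pos.mpr hω
  have hk1c : 1 ≤ ((ω a)ᶜ).card := card_pos.mpr hωc
  have hcard1 : (insert b' E).card = (ω a).card := by
    rw [card_insert_of_notMem hb'E, hE, card_erase_of_mem hb]
    omega
  have hcard2 : ((insert b' E)ᶜ).card = ((ω a)ᶜ).card := by
    rw [hcompl, card_insert_of_notMem hbF, hF, card_erase_of_mem hb']
    omega
  have hEcard : (E.card : ℝ) = ((ω a).card : ℝ) - 1 := by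
    rw [hE, card_erase_of_mem hb]; push_cast [hk1]; ring
  have hFcard : (F.card : ℝ) = (((ω a)ᶜ).card : ℝ) - 1 := by
    rw [hF, card_erase_of_mem hb']; push_cast [hk1c]; ring
  have hn : ((ω a).card : ℝ) + (((ω a)ᶜ).card : ℝ) = n := by
    have h := card_add_card_compl (ω a)
    rw [Fintype.card_fin] at h
    exact_mod_cast h
  -- sums
  have hA : ∑ p ∈ ω a, ∑ q ∈ (ω a)ᶜ, Q a p q
      = Q a b b' + ∑ q ∈ F, Q a b q + ∑ p ∈ E, Q a p b' + ∑ p ∈ E, ∑ q ∈ F, Q a p q := by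
    rw [← sum_insert_insert E F b b' hbE hb'F, hE, hF, insert_erase hb, insert_erase hb']
  have hB : ∑ p ∈ insert b' E, ∑ q ∈ (insert b' E)ᶜ, Q a p q
      = Q a b' b + ∑ q ∈ F, Q a b' q + ∑ p ∈ E, Q a p b + ∑ p ∈ E, ∑ q ∈ F, Q a p q := by
    rw [hcompl, sum_insert_insert E F b' b hb'E hbF]
  -- the difference D
  set D : ℝ := (Q a b b' - Q a b' b) + ∑ q ∈ F, (Q a b q - Q a b' q)
      + ∑ p ∈ E, (Q a p b' - Q a p b) with hD
  have hDbound : |D| ≤ (n : ℝ) - 1 := by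
    have h0 : |Q a b b' - Q a b' b| ≤ 1 := by
      have h1 := hQ a b b'; have h2 := hQ a b' b
      rw [abs_sub_le_iff]; constructor <;> [skip; skip] <;>
        · simp only [Set.mem_Icc] at h1 h2; linarith
    have hSF : |∑ q ∈ F, (Q a b q - Q a b' q)| ≤ (F.card : ℝ) := by
      calc |∑ q ∈ F, (Q a b q - Q a b' q)| ≤ ∑ q ∈ F, |Q a b q - Q a b' q| :=
            abs_sum_le_sum_abs _ _
        _ ≤ ∑ q ∈ F, 1 := by
            apply sum_le_sum; intro q _
            have h1 := hQ a b q; have h2 := hQ a b' q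
            simp only [Set.mem_Icc] at h1 h2
            rw [abs_sub_le_iff]; constructor <;> linarith
        _ = (F.card : ℝ) := by simp
    have hSE : |∑ p ∈ E, (Q a p b' - Q a p b)| ≤ (E.card : ℝ) := by
      calc |∑ p ∈ E, (Q a p b' - Q a p b)| ≤ ∑ p ∈ E, |Q a p b' - Q a p b| :=
            abs_sum_le_sum_abs _ _
        _ ≤ ∑ p ∈ E, 1 := by
            apply sum_le_sum; intro p _
            have h1 := hQ a p b'; have h2 := hQ a p b
            simp only [Set.mem_Icc] at h1 h2
            rw [abs_sub_le_iff]; constructor <;> linarith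
        _ = (E.card : ℝ) := by simp
    calc |D| ≤ |Q a b b' - Q a b' b| + |∑ q ∈ F, (Q a b q - Q a b' q)|
          + |∑ p ∈ E, (Q a p b' - Q a p b)| := by
          rw [hD]; exact (abs_add_le _ _).trans (by gcongr; exact abs_add_le _ _)
      _ ≤ 1 + (F.card : ℝ) + (E.card : ℝ) := by gcongr
      _ = (n : ℝ) - 1 := by rw [hEcard, hFcard]; linarith
  -- the key identity
  have hkey : empExp ω Q - empExp (Function.update ω a (insert b' E)) Q
      = (1 / ((m:ℝ) * ((ω a).card : ℝ) * (((ω a)ᶜ).card : ℝ))) * D := by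
    unfold empExp
    rw [← mul_sub, ← Finset.sum_sub_distrib,
      Finset.sum_eq_single_of_mem a (mem_univ a) (by
        intro i _ hia
        rw [Function.update_of_ne hia]
        ring)]
    rw [Function.update_self, hcard1, hcard2, hA, hB, hD]
    simp only [Finset.sum_sub_distrib]
    ring
  rw [hkey, abs_mul, abs_of_nonneg (by positivity : (0:ℝ) ≤ 1 / ((m:ℝ) * ((ω a).card : ℝ) * (((ω a)ᶜ).card : ℝ)))]
  calc 1 / ((m:ℝ) * ((ω a).card : ℝ) * (((ω a)ᶜ).card : ℝ)) * |D|
      ≤ 1 / ((m:ℝ) * ((ω a).card : ℝ) * (((ω a)ᶜ).card : ℝ)) * ((n:ℝ) - 1) := by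
        gcongr
    _ = ((n:ℝ) - 1) / ((m:ℝ) * ((ω a).card : ℝ) * (((ω a)ᶜ).card : ℝ)) := by ring

lemma sup_stab {α : Type*} (𝒬 : Set α) (h𝒬 : 𝒬.Nonempty) (f g : α → ℝ) (ε : ℝ)
    (hA : BddAbove (f '' 𝒬)) (hB : BddAbove (g '' 𝒬))
    (h : ∀ Q ∈ 𝒬, |f Q - g Q| ≤ ε) :
    |sSup (f '' 𝒬) - sSup (g '' 𝒬)| ≤ ε := by
  rw [abs_sub_le_iff]
  constructor <;> rw [sub_le_iff_le_add] <;> apply csSup_le (h𝒬.image _)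
  · rintro x ⟨Q, hQ, rfl⟩
    have h1 := (abs_sub_le_iff.1 (h Q hQ)).1
    have h2 : g Q ≤ sSup (g '' 𝒬) := le_csSup hB ⟨Q, hQ, rfl⟩
    linarith
  · rintro x ⟨Q, hQ, rfl⟩
    have h1 := (abs_sub_le_iff.1 (h Q hQ)).2
    have h2 : f Q ≤ sSup (f '' 𝒬) := le_csSup hA ⟨Q, hQ, rfl⟩
    linarith

lemma empExp_nonneg {m n : ℕ} (ω : Fin m → Finset (Fin n))
    (Q : Fin m → Fin n → Fin n → ℝ) (hQ : ∀ i p q, 0 ≤ Q i p q) :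
    0 ≤ empExp ω Q := by
  unfold empExp
  apply mul_nonneg (by positivity)
  apply Finset.sum_nonneg
  intro i _
  apply mul_nonneg (by positivity)
  exact Finset.sum_nonneg fun p _ => Finset.sum_nonneg fun q _ => hQ i p q

/-- Bounded-difference property of the supremum of `c(Q) − Ê_S[Q]`: replacing in the
sample the positive set `ω_a` by `ω_a' = (ω_a \ {b}) ∪ {b'}` (for `b ∈ ω_a`,
`b' ∈ ω̄_a`) changes `sup_{Q∈𝒬}(c(Q) − Ê_S[Q])` by at most `(n−1)/(m|ω_a||ω̄_a|)`. -/
theorem sup_diff_swap_stability (m n : ℕ) (hm : 1 ≤ m) (hn : 2 ≤ n)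
    (𝒬 : Set (Fin m → Fin n → Fin n → ℝ)) (h𝒬 : 𝒬.Nonempty)
    (hrange : ∀ Q ∈ 𝒬, ∀ i p q, Q i p q ∈ Set.Icc (0 : ℝ) 1)
    (c : (Fin m → Fin n → Fin n → ℝ) → ℝ)
    (hc : ∃ C : ℝ, ∀ Q ∈ 𝒬, |c Q| ≤ C)
    (ω : Fin m → Finset (Fin n))
    (hω : ∀ i, (ω i).Nonempty) (hωc : ∀ i, ((ω i)ᶜ).Nonempty)
    (a : Fin m) (b b' : Fin n) (hb : b ∈ ω a) (hb' : b' ∈ (ω a)ᶜ) :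
    |sSup ((fun Q => c Q - empExp ω Q) '' 𝒬) -
        sSup ((fun Q => c Q -
          empExp (Function.update ω a (insert b' ((ω a).erase b))) Q) '' 𝒬)| ≤
      ((n : ℝ) - 1) / ((m : ℝ) * ((ω a).card : ℝ) * (((ω a)ᶜ).card : ℝ)) := by
  obtain ⟨C, hC⟩ := hc
  have hbdd : ∀ ω₀ : Fin m → Finset (Fin n),
      BddAbove ((fun Q => c Q - empExp ω₀ Q) '' 𝒬) := by
    intro ω₀
    refine ⟨C, ?_⟩
    rintro x ⟨Q, hQ, rfl⟩
    have h0 : 0 ≤ empExp ω₀ Q :=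
      empExp_nonneg ω₀ Q fun i p q => (hrange Q hQ i p q).1
    have h1 := (abs_le.mp (hC Q hQ)).2
    simp only
    linarith
  apply sup_stab 𝒬 h𝒬 _ _ _ (hbdd ω) (hbdd _)
  intro Q hQ
  have h := empExp_swap_bound hm ω Q (hrange Q hQ) a b b' hb hb' (hω a) (hωc a)
  have heq : (c Q - empExp ω Q) -
      (c Q - empExp (Function.update ω a (insert b' ((ω a).erase b))) Q)
      = -(empExp ω Q - empExp (Function.update ω a (insert b' ((ω a).erase b))) Q) := by
    ring
  rw [heq, abs_neg]
  exact h
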